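/- Let A = (a_{ij}) be an n×n real matrix such that D(A) belongs to the class 𝒟, D(A) is strongly connected, and Δ_A ≠ 0, and let B = (b_{ij}) be the n×n matrix with entries b_{ij} = μ_{ij}/Δ_A. Then the diagonal entries of AB satisfy: (AB)_{ii} = 1 if i is a non-pendant vertex, and (AB)_{ii} = (Σ_{M ∈ 𝕄(i)} η(M))/Δ_A if i is a pendant vertex, where 𝕄(i) is the set of maximum matchings in which vertex i is matched and η(M) is the matching product of M. For i ≠ j: (AB)_{ij} = a_{qj} μ_{iq}/Δ_A if i and j are both pendant vertices with a common neighbour q, and (AB)_{ij} = 0 otherwise. -/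

import Mathlib

open Matrix

/-- Adjacency in a digraph given by relation `G`: a 2-cycle between distinct `i` and `j`. -/
def Adjd {n : ℕ} (G : Fin n → Fin n → Prop) (i j : Fin n) : Prop :=
  i ≠ j ∧ G i j ∧ G j i

/-- `G` is a simple symmetric digraph: no loops and edges come in both directions. -/
def IsSSD {n : ℕ} (G : Fin n → Fin n → Prop) : Prop :=
  (∀ i, ¬ G i i) ∧ ∀ i j, G i j → G j i

/-- A vertex is pendant if it is incident to exactly one 2-cycle. -/
def Pendant {n : ℕ} (G : Fin n → Fin n → Prop) (i : Fin n) : Prop :=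
  ∃! j, Adjd G i j

/-- The class 𝒟: simple symmetric digraphs in which every non-pendant vertex is
adjacent to at least one pendant vertex. -/
def InClassD {n : ℕ} (G : Fin n → Fin n → Prop) : Prop :=
  IsSSD G ∧ ∀ i, ¬ Pendant G i → ∃ j, Adjd G i j ∧ Pendant G j

/-- Strong connectivity: a directed path from every vertex to every other vertex. -/
def StronglyConnected {n : ℕ} (G : Fin n → Fin n → Prop) : Prop :=
  ∀ i j : Fin n, Relation.ReflTransGen G i j

/-- An unordered pair `e` is a 2-cycle of `G`. -/
def IsEdge {n : ℕ} (G : Fin n → Fin n → Prop) (e : Sym2 (Fin n)) : Prop :=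
  ∃ i j, e = s(i, j) ∧ Adjd G i j

/-- A matching: a set of pairwise vertex-disjoint 2-cycles. -/
def IsMatching {n : ℕ} (G : Fin n → Fin n → Prop) (M : Finset (Sym2 (Fin n))) : Prop :=
  (∀ e ∈ M, IsEdge G e) ∧
  ∀ e ∈ M, ∀ f ∈ M, e ≠ f → ∀ v : Fin n, v ∈ e → v ∉ f

/-- A maximum matching: a matching of maximum cardinality. -/
def IsMaxMatching {n : ℕ} (G : Fin n → Fin n → Prop) (M : Finset (Sym2 (Fin n))) : Prop :=
  IsMatching G M ∧ ∀ M', IsMatching G M' → M'.card ≤ M.card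

/-- A cycle chain, recorded by its list of (distinct) vertices `i₁, …, i_{m+1}`. -/
def IsCycleChain {n : ℕ} (G : Fin n → Fin n → Prop) (c : List (Fin n)) : Prop :=
  c.Nodup ∧ 2 ≤ c.length ∧ c.Chain' (Adjd G)

/-- A cycle chain from `i` to `j`. -/
def IsCycleChainBtw {n : ℕ} (G : Fin n → Fin n → Prop) (i j : Fin n) (c : List (Fin n)) : Prop :=
  IsCycleChain G c ∧ c.head? = some i ∧ c.getLast? = some j

/-- The list of 2-cycles of a cycle chain. -/
def chainEdges {n : ℕ} (c : List (Fin n)) : List (Sym2 (Fin n)) :=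
  List.zipWith (fun a b => s(a, b)) c c.tail

/-- The cycle chain `c` is alternating with respect to `M`: its 2-cycles are alternately
in `M` and outside `M`, with the first and last 2-cycle in `M` (so its length is odd). -/
def IsAltChain {n : ℕ} (M : Finset (Sym2 (Fin n))) (c : List (Fin n)) : Prop :=
  Odd (chainEdges c).length ∧
  ∀ k (h : k < (chainEdges c).length), ((chainEdges c).get ⟨k, h⟩ ∈ M ↔ Even k)

/-- The digraph of a square matrix: edge `(i,j)` iff `A i j ≠ 0`. -/
def DA {n : ℕ} (A : Matrix (Fin n) (Fin n) ℝ) : Fin n → Fin n → Prop :=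
  fun i j => A i j ≠ 0

/-- The cycle product `a_{ij} a_{ji}` of a 2-cycle. -/
def cycProd {n : ℕ} (A : Matrix (Fin n) (Fin n) ℝ) (e : Sym2 (Fin n)) : ℝ :=
  Sym2.lift ⟨fun i j => A i j * A j i, fun i j => mul_comm _ _⟩ e

/-- The matching product η(M) of a matching `M`. -/
noncomputable def matchProd {n : ℕ} (A : Matrix (Fin n) (Fin n) ℝ)
    (M : Finset (Sym2 (Fin n))) : ℝ :=
  ∏ e ∈ M, cycProd A e

/-- The (finite) collection of all maximum matchings of `D(A)`. -/
noncomputable def maxMatchings {n : ℕ} (A : Matrix (Fin n) (Fin n) ℝ) :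
    Finset (Finset (Sym2 (Fin n))) :=
  {M | IsMaxMatching (DA A) M}.toFinite.toFinset

/-- Δ_A: the sum of the matching products over all maximum matchings of `D(A)`. -/
noncomputable def Delta {n : ℕ} (A : Matrix (Fin n) (Fin n) ℝ) : ℝ :=
  ∑ M ∈ maxMatchings A, matchProd A M

/-- 𝕄(i,j): maximum matchings with respect to which some cycle chain from `i` to `j`
is an alternating cycle chain. -/
def MMset {n : ℕ} (A : Matrix (Fin n) (Fin n) ℝ) (i j : Fin n) :
    Set (Finset (Sym2 (Fin n))) :=
  {M | IsMaxMatching (DA A) M ∧ ∃ c, IsCycleChainBtw (DA A) i j c ∧ IsAltChain M c}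

/-- `i` and `j` are maximally matchable: 𝕄(i,j) ≠ ∅. -/
def MaxMatchable {n : ℕ} (A : Matrix (Fin n) (Fin n) ℝ) (i j : Fin n) : Prop :=
  (MMset A i j).Nonempty

open scoped Classical in
/-- The (unique) alternating cycle chain from `i` to `j`, when it exists. -/
noncomputable def theChain {n : ℕ} (A : Matrix (Fin n) (Fin n) ℝ) (i j : Fin n) :
    List (Fin n) :=
  if h : ∃ c, IsCycleChainBtw (DA A) i j c ∧ ∃ M ∈ MMset A i j, IsAltChain M c
  then h.choose else []

/-- The path product along a cycle chain: `a_{i₁ i₂} a_{i₂ i₃} ⋯ a_{i_m i_{m+1}}`. -/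
def pathProd {n : ℕ} (A : Matrix (Fin n) (Fin n) ℝ) (c : List (Fin n)) : ℝ :=
  (List.zipWith (fun a b => A a b) c c.tail).prod

open scoped Classical in
/-- β_{ij} = (−1)^{(m−1)/2} P_m(i,j) for maximally matchable `i, j`, and `0` otherwise. -/
noncomputable def beta {n : ℕ} (A : Matrix (Fin n) (Fin n) ℝ) (i j : Fin n) : ℝ :=
  if MaxMatchable A i j then
    (-1 : ℝ) ^ (((theChain A i j).length - 2) / 2) * pathProd A (theChain A i j)
  else 0

/-- β̄_{i,j}(M): product of the cycle products of the 2-cycles of `M` not contained in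
the alternating cycle chain from `i` to `j`. -/
noncomputable def betaBar {n : ℕ} (A : Matrix (Fin n) (Fin n) ℝ) (i j : Fin n)
    (M : Finset (Sym2 (Fin n))) : ℝ :=
  ∏ e ∈ M.filter (fun e => e ∉ chainEdges (theChain A i j)), cycProd A e

/-- μ_{ij} = β_{ij} · Σ_{M ∈ 𝕄(i,j)} β̄_{i,j}(M). -/
noncomputable def mu {n : ℕ} (A : Matrix (Fin n) (Fin n) ℝ) (i j : Fin n) : ℝ :=
  beta A i j * ∑ M ∈ (MMset A i j).toFinite.toFinset, betaBar A i j M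

/-- `X` is a group inverse of `A`. -/
def IsGroupInverse {n : ℕ} (A X : Matrix (Fin n) (Fin n) ℝ) : Prop :=
  A * X * A = A ∧ X * A * X = X ∧ A * X = X * A

/-- A tree digraph: strongly connected and all of its cycles have length 2. -/
def IsTreeDigraph {n : ℕ} (G : Fin n → Fin n → Prop) : Prop :=
  StronglyConnected G ∧
  ∀ (a : Fin n) (l : List (Fin n)), (a :: l).Nodup → List.Chain G a l →
    G ((a :: l).getLast (List.cons_ne_nil a l)) a → (a :: l).length = 2

/-- A star tree digraph: a tree digraph with a center adjacent to every other vertex,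
every other vertex being adjacent only to the center. -/
def IsStarTree {n : ℕ} (G : Fin n → Fin n → Prop) : Prop :=
  IsTreeDigraph G ∧
  ∃ c : Fin n, (∀ j, j ≠ c → Adjd G c j) ∧ ∀ i j, Adjd G i j → i = c ∨ j = c

/-- A corona digraph: a simple symmetric digraph in which each non-pendant vertex is
adjacent to exactly one pendant vertex. -/
def IsCorona {n : ℕ} (G : Fin n → Fin n → Prop) : Prop :=
  IsSSD G ∧ ∀ i, ¬ Pendant G i → ∃! j, Adjd G i j ∧ Pendant G j

/-- 𝕄(i): the maximum matchings in which vertex `i` is matched. -/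
noncomputable def MMi {n : ℕ} (A : Matrix (Fin n) (Fin n) ℝ) (i : Fin n) :
    Finset (Finset (Sym2 (Fin n))) :=
  {M | IsMaxMatching (DA A) M ∧ ∃ e ∈ M, i ∈ e}.toFinite.toFinset

section Basics

variable {n : ℕ} {G : Fin n → Fin n → Prop}

lemma Adjd.symm {i j : Fin n} (h : Adjd G i j) : Adjd G j i :=
  ⟨h.1.symm, h.2.2, h.2.1⟩

lemma Adjd.ne {i j : Fin n} (h : Adjd G i j) : i ≠ j := h.1

/-- the unique neighbour of a pendant vertex -/
noncomputable def pnbr {i : Fin n} (h : Pendant G i) : Fin n := h.choose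

lemma pnbr_adj {i : Fin n} (h : Pendant G i) : Adjd G i (pnbr h) := h.choose_spec.1

lemma pnbr_eq {i j : Fin n} (h : Pendant G i) (hj : Adjd G i j) : j = pnbr h :=
  h.choose_spec.2 j hj

lemma IsMatching.isEdge {M : Finset (Sym2 (Fin n))} (hM : IsMatching G M)
    {e : Sym2 (Fin n)} (he : e ∈ M) : IsEdge G e := hM.1 e he

lemma IsMatching.adj_of_mem {M : Finset (Sym2 (Fin n))} (hM : IsMatching G M)
    {a b : Fin n} (he : s(a, b) ∈ M) : Adjd G a b := by
  obtain ⟨x, y, hxy, hadj⟩ := hM.1 _ he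
  rw [Sym2.eq_iff] at hxy
  rcases hxy with ⟨rfl, rfl⟩ | ⟨rfl, rfl⟩
  · exact hadj
  · exact hadj.symm

lemma IsMatching.ne_of_mem {M : Finset (Sym2 (Fin n))} (hM : IsMatching G M)
    {a b : Fin n} (he : s(a, b) ∈ M) : a ≠ b := (hM.adj_of_mem he).ne

lemma IsMatching.eq_of_mem {M : Finset (Sym2 (Fin n))} (hM : IsMatching G M)
    {e f : Sym2 (Fin n)} {v : Fin n} (he : e ∈ M) (hf : f ∈ M) (hve : v ∈ e)
    (hvf : v ∈ f) : e = f := by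
  by_contra hne
  exact hM.2 e he f hf hne v hve hvf

/-- the partner of `c` is unique -/
lemma IsMatching.partner_eq {M : Finset (Sym2 (Fin n))} (hM : IsMatching G M)
    {a b c : Fin n} (h1 : s(a, c) ∈ M) (h2 : s(b, c) ∈ M) : a = b := by
  have := hM.eq_of_mem h1 h2 (Sym2.mem_mk_right a c) (Sym2.mem_mk_right b c)
  rw [Sym2.eq_iff] at this
  rcases this with ⟨h, -⟩ | ⟨h, h'⟩
  · exact h
  · exact (hM.ne_of_mem h1 h).elim

/-- a vertex is matched in `M` -/
def MatchedIn (M : Finset (Sym2 (Fin n))) (v : Fin n) : Prop := ∃ e ∈ M, v ∈ e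

lemma matched_iff {M : Finset (Sym2 (Fin n))} (hM : IsMatching G M) {v : Fin n} :
    MatchedIn M v ↔ ∃ w, s(w, v) ∈ M := by
  constructor
  · rintro ⟨e, heM, hve⟩
    induction e with
    | _ a b =>
      rcases Sym2.mem_iff.mp hve with rfl | rfl
      · exact ⟨b, by rwa [Sym2.eq_swap]⟩
      · exact ⟨a, heM⟩
  · rintro ⟨w, hw⟩
    exact ⟨_, hw, Sym2.mem_mk_right w v⟩

lemma not_matched_notmem {M : Finset (Sym2 (Fin n))} {v : Fin n}
    (h : ¬ MatchedIn M v) {e : Sym2 (Fin n)} (he : e ∈ M) : v ∉ e :=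
  fun hve => h ⟨e, he, hve⟩

lemma IsMatching.subset {M M' : Finset (Sym2 (Fin n))} (hM : IsMatching G M)
    (hsub : M' ⊆ M) : IsMatching G M' :=
  ⟨fun e he => hM.1 e (hsub he),
   fun e he f hf hne v hv => hM.2 e (hsub he) f (hsub hf) hne v hv⟩

lemma IsMatching.insert {M : Finset (Sym2 (Fin n))} (hM : IsMatching G M)
    {a b : Fin n} (hadj : Adjd G a b) (ha : ¬ MatchedIn M a) (hb : ¬ MatchedIn M b) :
    IsMatching G (insert s(a, b) M) := by
  constructor
  · intro e he
    rcases Finset.mem_insert.mp he with rfl | he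
    · exact ⟨a, b, rfl, hadj⟩
    · exact hM.1 e he
  · intro e he f hf hne v hve hvf
    rcases Finset.mem_insert.mp he with he' | he <;>
      rcases Finset.mem_insert.mp hf with hf' | hf
    · exact hne (he'.trans hf'.symm)
    · subst he'
      rcases Sym2.mem_iff.mp hve with h | h
      · exact not_matched_notmem ha hf (h ▸ hvf)
      · exact not_matched_notmem hb hf (h ▸ hvf)
    · subst hf'
      rcases Sym2.mem_iff.mp hvf with h | h
      · exact not_matched_notmem ha he (h ▸ hve)
      · exact not_matched_notmem hb he (h ▸ hve)
    · exact hM.2 e he f hf hne v hve hvf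

lemma notmem_of_unmatched {M : Finset (Sym2 (Fin n))} {a b : Fin n}
    (ha : ¬ MatchedIn M a) : s(a, b) ∉ M :=
  fun h => ha ⟨_, h, Sym2.mem_mk_left a b⟩

end Basics
section Struct

variable {n : ℕ} {G : Fin n → Fin n → Prop} {M : Finset (Sym2 (Fin n))}

lemma not_matched_insert {x a b : Fin n} (hx : ¬ MatchedIn M x) (hxa : x ≠ a)
    (hxb : x ≠ b) : ¬ MatchedIn (insert s(a, b) M) x := by
  rintro ⟨e, he, hxe⟩
  rcases Finset.mem_insert.mp he with rfl | he
  · rcases Sym2.mem_iff.mp hxe with h | h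
    · exact hxa h
    · exact hxb h
  · exact hx ⟨e, he, hxe⟩

lemma pendant_matched_edge (hM : IsMatching G M) {p u : Fin n} (hp : Pendant G p)
    (hadj : Adjd G p u) (h : MatchedIn M p) : s(u, p) ∈ M := by
  obtain ⟨w, hw⟩ := (matched_iff hM).mp h
  have hadjw : Adjd G p w := (hM.adj_of_mem hw).symm
  rwa [(pnbr_eq hp hadjw).trans (pnbr_eq hp hadj).symm] at hw

/-- L1a: in a maximum matching of a graph in class 𝒟, every non-pendant vertex
is matched. -/
lemma matched_of_not_pendant (hG : InClassD G) (hM : IsMaxMatching G M)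
    {i : Fin n} (hi : ¬ Pendant G i) : MatchedIn M i := by
  by_contra hiu
  obtain ⟨p, hip, hp⟩ := hG.2 i hi
  have hpu : ¬ MatchedIn M p := by
    intro hpm
    exact hiu ⟨_, pendant_matched_edge hM.1 hp hip.symm hpm, Sym2.mem_mk_left i p⟩
  have hM' : IsMatching G (insert s(p, i) M) := hM.1.insert hip.symm hpu hiu
  have hcard := hM.2 _ hM'
  rw [Finset.card_insert_of_notMem (notmem_of_unmatched hpu)] at hcard
  omega

/-- L1b: in a maximum matching of a graph in class 𝒟, no edge joins two
non-pendant vertices. -/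
lemma not_both_nonpendant (hG : InClassD G) (hM : IsMaxMatching G M)
    {u v : Fin n} (he : s(u, v) ∈ M) (hu : ¬ Pendant G u) (hv : ¬ Pendant G v) :
    False := by
  have huv : Adjd G u v := hM.1.adj_of_mem he
  obtain ⟨p, hup, hp⟩ := hG.2 u hu
  obtain ⟨p', hvp', hp'⟩ := hG.2 v hv
  -- p is unmatched
  have hpu : ¬ MatchedIn M p := by
    intro hpm
    have h1 : s(u, p) ∈ M := pendant_matched_edge hM.1 hp hup.symm hpm
    have := hM.1.eq_of_mem h1 he (Sym2.mem_mk_left u p) (Sym2.mem_mk_left u v)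
    rw [Sym2.eq_iff] at this
    rcases this with ⟨-, h2⟩ | ⟨h2, -⟩
    · exact hv (h2 ▸ hp)
    · exact huv.ne h2
  have hp'u : ¬ MatchedIn M p' := by
    intro hpm
    have h1 : s(v, p') ∈ M := pendant_matched_edge hM.1 hp' hvp'.symm hpm
    have := hM.1.eq_of_mem h1 he (Sym2.mem_mk_left v p') (Sym2.mem_mk_right u v)
    rw [Sym2.eq_iff] at this
    rcases this with ⟨h2, -⟩ | ⟨-, h2⟩
    · exact huv.ne h2.symm
    · exact hu (h2 ▸ hp')
  -- distinctness
  have hpv : p ≠ v := fun h => hv (h ▸ hp)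
  have hpu' : p ≠ u := hup.ne.symm
  have hp'u2 : p' ≠ u := fun h => hu (h ▸ hp')
  have hp'v : p' ≠ v := hvp'.ne.symm
  have hpp' : p ≠ p' := by
    rintro rfl
    exact huv.ne ((pnbr_eq hp hup.symm).trans (pnbr_eq hp hvp'.symm).symm)
  -- surgery
  set M1 := M.erase s(u, v) with hM1
  have hM1m : IsMatching G M1 := hM.1.subset (Finset.erase_subset _ _)
  have huun : ¬ MatchedIn M1 u := by
    rintro ⟨e, heM, hue⟩
    have heM' : e ∈ M := Finset.mem_of_mem_erase heM
    have := hM.1.eq_of_mem heM' he hue (Sym2.mem_mk_left u v)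
    exact Finset.ne_of_mem_erase heM this
  have hvun : ¬ MatchedIn M1 v := by
    rintro ⟨e, heM, hue⟩
    have heM' : e ∈ M := Finset.mem_of_mem_erase heM
    have := hM.1.eq_of_mem heM' he hue (Sym2.mem_mk_right u v)
    exact Finset.ne_of_mem_erase heM this
  have hpun1 : ¬ MatchedIn M1 p :=
    fun ⟨e, heM, hpe⟩ => hpu ⟨e, Finset.mem_of_mem_erase heM, hpe⟩
  have hp'un1 : ¬ MatchedIn M1 p' :=
    fun ⟨e, heM, hpe⟩ => hp'u ⟨e, Finset.mem_of_mem_erase heM, hpe⟩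
  have hM2m : IsMatching G (insert s(p, u) M1) := hM1m.insert hup.symm hpun1 huun
  have hp'un2 : ¬ MatchedIn (insert s(p, u) M1) p' :=
    not_matched_insert hp'un1 hpp'.symm hp'u2
  have hvun2 : ¬ MatchedIn (insert s(p, u) M1) v :=
    not_matched_insert hvun hpv.symm huv.ne.symm
  have hM3m : IsMatching G (insert s(p', v) (insert s(p, u) M1)) :=
    hM2m.insert hvp'.symm hp'un2 hvun2
  have hcard := hM.2 _ hM3m
  rw [Finset.card_insert_of_notMem (notmem_of_unmatched hp'un2),
    Finset.card_insert_of_notMem (notmem_of_unmatched hpun1),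
    Finset.card_erase_of_mem he] at hcard
  have hMpos : 0 < M.card := Finset.card_pos.mpr ⟨_, he⟩
  omega

end Struct
section Chain

variable {n : ℕ} {G : Fin n → Fin n → Prop} {M : Finset (Sym2 (Fin n))}

lemma nonpendant_of_two_adj {u a v : Fin n} (h1 : Adjd G u a) (h2 : Adjd G u v)
    (hav : a ≠ v) : ¬ Pendant G u := by
  intro hp
  exact hav ((pnbr_eq hp h1).trans (pnbr_eq hp h2).symm)

/-- Classification of alternating cycle chains with respect to a maximum matching
of a graph in class 𝒟: they have length 1 or 3. -/
lemma alt_chain_classify (hG : InClassD G) (hM : IsMaxMatching G M)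
    {c : List (Fin n)} (hcc : IsCycleChain G c) (halt : IsAltChain M c) :
    (∃ a b, c = [a, b] ∧ s(a, b) ∈ M) ∨
    (∃ a u v b, c = [a, u, v, b] ∧ s(a, u) ∈ M ∧ s(u, v) ∉ M ∧ s(v, b) ∈ M ∧
      Pendant G a ∧ Pendant G b ∧ ¬ Pendant G u ∧ ¬ Pendant G v) := by
  obtain ⟨hnd, hlen, hch⟩ := hcc
  obtain ⟨hodd, hmem⟩ := halt
  match c with
  | [] => simp at hlen
  | [a] => simp at hlen
  | [a, b] =>
    left
    refine ⟨a, b, rfl, ?_⟩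
    have h0 := hmem 0 (by simp [chainEdges])
    simpa [chainEdges] using h0
  | [a, b, u] =>
    exfalso
    simp [chainEdges] at hodd
    exact (Nat.not_odd_iff_even.mpr (by decide)) hodd
  | [a, u, v, b] =>
    right
    have hav : a ≠ v := by rintro rfl; simp at hnd
    have hub : u ≠ b := by rintro rfl; simp at hnd
    simp only [List.Chain', List.isChain_cons_cons, List.isChain_singleton, and_true] at hch
    obtain ⟨hAau, hAuv, hAvb⟩ := hch
    have h0 : s(a, u) ∈ M := by
      have := hmem 0 (by simp [chainEdges]); simpa [chainEdges] using this
    have h1 : s(u, v) ∉ M := by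
      have := hmem 1 (by simp [chainEdges]); simp [chainEdges] at this
      simpa using this
    have h2 : s(v, b) ∈ M := by
      have := hmem 2 (by simp [chainEdges]); simpa [chainEdges] using this
    have hunp : ¬ Pendant G u := nonpendant_of_two_adj hAau.symm hAuv hav
    have hvnp : ¬ Pendant G v := nonpendant_of_two_adj hAuv.symm hAvb hub
    have hap : Pendant G a := by
      by_contra h
      exact not_both_nonpendant hG hM h0 h hunp
    have hbp : Pendant G b := by
      by_contra h
      exact not_both_nonpendant hG hM h2 hvnp h
    exact ⟨a, u, v, b, rfl, h0, h1, h2, hap, hbp, hunp, hvnp⟩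
  | a :: b :: u :: v :: w :: t =>
    exfalso
    have hbv : b ≠ v := by rintro rfl; simp at hnd
    have huw : u ≠ w := by rintro rfl; simp at hnd
    simp only [List.Chain', List.isChain_cons_cons] at hch
    have hAbu : Adjd G b u := hch.2.1
    have hAuv : Adjd G u v := hch.2.2.1
    have hAvw : Adjd G v w := hch.2.2.2.1
    have h2 : s(u, v) ∈ M := by
      have hlt : 2 < (chainEdges (a :: b :: u :: v :: w :: t)).length := by
        simp [chainEdges, List.length_zipWith]
      have := hmem 2 hlt
      simpa [chainEdges] using this
    exact not_both_nonpendant hG hM h2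
      (nonpendant_of_two_adj hAbu.symm hAuv hbv)
      (nonpendant_of_two_adj hAuv.symm hAvw huw)

end Chain
section MMsetLemmas

variable {n : ℕ} {G : Fin n → Fin n → Prop} {M : Finset (Sym2 (Fin n))}

lemma ccb_pair {i j : Fin n} (hadj : Adjd G i j) : IsCycleChainBtw G i j [i, j] := by
  refine ⟨⟨by simp [hadj.ne], by simp, by simp [List.Chain', hadj]⟩, rfl, by simp⟩

lemma alt_pair {i j : Fin n} (h : s(i, j) ∈ M) : IsAltChain M [i, j] := by
  refine ⟨by simp [chainEdges, Nat.odd_iff], ?_⟩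
  intro k hk
  have hk' : k < 1 := by simpa [chainEdges] using hk
  interval_cases k
  · show s(i, j) ∈ M ↔ Even 0
    simp [h]

lemma ccb_quad {i u v j : Fin n} (hiu : Adjd G i u) (huv : Adjd G u v)
    (hvj : Adjd G v j) (hiv : i ≠ v) (hij : i ≠ j) (huj : u ≠ j) :
    IsCycleChainBtw G i j [i, u, v, j] := by
  refine ⟨⟨?_, by simp, ?_⟩, rfl, by simp⟩
  · simp [hiu.ne, huv.ne, hvj.ne, hiv, hij, huj]
  · simp [List.Chain', List.isChain_cons_cons, hiu, huv, hvj]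

lemma alt_quad {i u v j : Fin n} (h0 : s(i, u) ∈ M) (h1 : s(u, v) ∉ M)
    (h2 : s(v, j) ∈ M) : IsAltChain M [i, u, v, j] := by
  refine ⟨by simp [chainEdges, Nat.odd_iff], ?_⟩
  intro k hk
  have hk' : k < 3 := by simpa [chainEdges] using hk
  interval_cases k
  · show s(i, u) ∈ M ↔ Even 0
    simp [h0]
  · show s(u, v) ∈ M ↔ Even 1
    simp [h1, Nat.even_iff]
  · show s(v, j) ∈ M ↔ Even 2
    simp [h2]

end MMsetLemmas

section MatrixLemmas

variable {n : ℕ} {A : Matrix (Fin n) (Fin n) ℝ} {M : Finset (Sym2 (Fin n))}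

lemma mem_MMset_iff {i j : Fin n} :
    M ∈ MMset A i j ↔ IsMaxMatching (DA A) M ∧
      ∃ c, IsCycleChainBtw (DA A) i j c ∧ IsAltChain M c := Iff.rfl

lemma matchable_of_edge (hM : IsMaxMatching (DA A) M) {i j : Fin n}
    (h : s(i, j) ∈ M) : MaxMatchable A i j :=
  ⟨M, hM, [i, j], ccb_pair (hM.1.adj_of_mem h), alt_pair h⟩

/-- Characterisation of `MMset A i j` when `i` and `j` are adjacent. -/
lemma mem_MMset_adj (hG : InClassD (DA A)) {i j : Fin n} (hadj : Adjd (DA A) i j) :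
    M ∈ MMset A i j ↔ IsMaxMatching (DA A) M ∧ s(i, j) ∈ M := by
  constructor
  · rintro ⟨hM, c, hccb, halt⟩
    refine ⟨hM, ?_⟩
    rcases alt_chain_classify hG hM hccb.1 halt with
      ⟨a, b, rfl, hab⟩ | ⟨a, u, v, b, rfl, h0, h1, h2, hap, hbp, hun, hvn⟩
    · have ha : a = i := by simpa using hccb.2.1
      have hb : b = j := by simpa using hccb.2.2
      exact ha ▸ hb ▸ hab
    · exfalso
      have ha : a = i := by simpa using hccb.2.1
      have hb : b = j := by simpa using hccb.2.2
      subst ha; subst hb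
      have huj : u ≠ b := by
        have hnd := hccb.1.1
        rintro rfl; simp at hnd
      have hAiu : Adjd (DA A) a u := hM.1.adj_of_mem h0
      exact huj ((pnbr_eq hap hAiu).trans (pnbr_eq hap hadj).symm)
  · rintro ⟨hM, h⟩
    exact ⟨hM, [i, j], ccb_pair hadj, alt_pair h⟩

/-- Characterisation of `MMset A i j` for non-adjacent pendant `i`, `j` with
adjacent distinct neighbours. -/
lemma mem_MMset_nonadj (hG : InClassD (DA A)) {i j u v : Fin n}
    (hna : ¬ Adjd (DA A) i j) (hpi : Pendant (DA A) i) (hpj : Pendant (DA A) j)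
    (hiu : Adjd (DA A) i u) (hjv : Adjd (DA A) j v) (huv : u ≠ v)
    (hAuv : Adjd (DA A) u v) :
    M ∈ MMset A i j ↔ IsMaxMatching (DA A) M ∧ s(i, u) ∈ M ∧ s(v, j) ∈ M := by
  have hij : i ≠ j := by
    rintro rfl
    exact huv ((pnbr_eq hpi hiu).trans (pnbr_eq hpi hjv).symm)
  have hiv : i ≠ v := by
    rintro rfl
    exact hna hjv.symm
  have huj : u ≠ j := by
    rintro rfl
    exact hna hiu
  constructor
  · rintro ⟨hM, c, hccb, halt⟩
    refine ⟨hM, ?_⟩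
    rcases alt_chain_classify hG hM hccb.1 halt with
      ⟨a, b, rfl, hab⟩ | ⟨a, u', v', b, rfl, h0, h1, h2, hap, hbp, hun, hvn⟩
    · exfalso
      have ha : a = i := by simpa using hccb.2.1
      have hb : b = j := by simpa using hccb.2.2
      exact hna (ha ▸ hb ▸ hM.1.adj_of_mem hab)
    · have ha : a = i := by simpa using hccb.2.1
      have hb : b = j := by simpa using hccb.2.2
      subst ha; subst hb
      have hu' : u' = u := (pnbr_eq hpi (hM.1.adj_of_mem h0)).trans (pnbr_eq hpi hiu).symm
      have hv' : v' = v :=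
        (pnbr_eq hpj ((hM.1.adj_of_mem h2).symm)).trans (pnbr_eq hpj hjv).symm
      exact ⟨hu' ▸ h0, hv' ▸ h2⟩
  · rintro ⟨hM, h0, h2⟩
    have h1 : s(u, v) ∉ M := by
      intro h1
      have hne : s(u, v) ≠ s(i, u) := by
        intro heq
        rw [Sym2.eq_iff] at heq
        rcases heq with ⟨h3, h4⟩ | ⟨h3, h4⟩
        · exact hAuv.ne h4.symm
        · exact hiv h4.symm
      exact hM.1.2 _ h1 _ h0 hne u (Sym2.mem_mk_left u v) (Sym2.mem_mk_right i u)
    exact ⟨hM, [i, u, v, j], ccb_quad hiu hAuv hjv.symm hiv hij huj,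
      alt_quad h0 h1 h2⟩

/-- `theChain` when `i`, `j` are adjacent. -/
lemma theChain_adj (hG : InClassD (DA A)) {i j : Fin n} (hadj : Adjd (DA A) i j)
    (h : MaxMatchable A i j) : theChain A i j = [i, j] := by
  obtain ⟨M0, hM0⟩ := h
  obtain ⟨hM0max, c0, hccb0, halt0⟩ := hM0
  have hEx : ∃ c, IsCycleChainBtw (DA A) i j c ∧ ∃ M ∈ MMset A i j, IsAltChain M c :=
    ⟨c0, hccb0, M0, ⟨hM0max, c0, hccb0, halt0⟩, halt0⟩
  rw [theChain, dif_pos hEx]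
  obtain ⟨hccb, M, hMmem, halt⟩ := hEx.choose_spec
  have hMmax : IsMaxMatching (DA A) M := hMmem.1
  rcases alt_chain_classify hG hMmax hccb.1 halt with
    ⟨a, b, hc, hab⟩ | ⟨a, u, v, b, hc, h0, h1, h2, hap, hbp, hun, hvn⟩
  · rw [hc] at hccb ⊢
    have ha : a = i := by simpa using hccb.2.1
    have hb : b = j := by simpa using hccb.2.2
    rw [ha, hb]
  · exfalso
    rw [hc] at hccb
    have ha : a = i := by simpa using hccb.2.1
    have hb : b = j := by simpa using hccb.2.2
    subst ha; subst hb
    have huj : u ≠ b := by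
      have hnd := hccb.1.1
      rintro rfl; simp at hnd
    have hAiu : Adjd (DA A) a u := hMmax.1.adj_of_mem h0
    exact huj ((pnbr_eq hap hAiu).trans (pnbr_eq hap hadj).symm)

/-- `theChain` for non-adjacent pendant `i`, `j`. -/
lemma theChain_nonadj (hG : InClassD (DA A)) {i j u v : Fin n}
    (hna : ¬ Adjd (DA A) i j) (hpi : Pendant (DA A) i) (hpj : Pendant (DA A) j)
    (hiu : Adjd (DA A) i u) (hjv : Adjd (DA A) j v)
    (h : MaxMatchable A i j) : theChain A i j = [i, u, v, j] := by
  obtain ⟨M0, hM0⟩ := h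
  obtain ⟨hM0max, c0, hccb0, halt0⟩ := hM0
  have hEx : ∃ c, IsCycleChainBtw (DA A) i j c ∧ ∃ M ∈ MMset A i j, IsAltChain M c :=
    ⟨c0, hccb0, M0, ⟨hM0max, c0, hccb0, halt0⟩, halt0⟩
  rw [theChain, dif_pos hEx]
  obtain ⟨hccb, M, hMmem, halt⟩ := hEx.choose_spec
  have hMmax : IsMaxMatching (DA A) M := hMmem.1
  rcases alt_chain_classify hG hMmax hccb.1 halt with
    ⟨a, b, hc, hab⟩ | ⟨a, u', v', b, hc, h0, h1, h2, hap, hbp, hun, hvn⟩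
  · exfalso
    rw [hc] at hccb
    have ha : a = i := by simpa using hccb.2.1
    have hb : b = j := by simpa using hccb.2.2
    exact hna (ha ▸ hb ▸ hMmax.1.adj_of_mem hab)
  · rw [hc] at hccb ⊢
    have ha : a = i := by simpa using hccb.2.1
    have hb : b = j := by simpa using hccb.2.2
    subst ha; subst hb
    have hu' : u' = u := (pnbr_eq hpi (hMmax.1.adj_of_mem h0)).trans (pnbr_eq hpi hiu).symm
    have hv' : v' = v :=
      (pnbr_eq hpj ((hMmax.1.adj_of_mem h2).symm)).trans (pnbr_eq hpj hjv).symm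
    rw [hu', hv']

end MatrixLemmas
section MuLemmas

variable {n : ℕ} {A : Matrix (Fin n) (Fin n) ℝ} {M : Finset (Sym2 (Fin n))}

lemma mem_maxMatchings : M ∈ maxMatchings A ↔ IsMaxMatching (DA A) M := by
  rw [maxMatchings, Set.Finite.mem_toFinset]
  rfl

lemma cycProd_mk (a b : Fin n) : cycProd A s(a, b) = A a b * A b a := rfl

/-- μ_{ij} for adjacent `i`, `j`. -/
lemma mu_adj (hG : InClassD (DA A)) {i j : Fin n} (hadj : Adjd (DA A) i j) :
    mu A i j = A i j * ∑ M ∈ (maxMatchings A).filter (fun M => s(i, j) ∈ M),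
      ∏ e ∈ M.erase s(i, j), cycProd A e := by
  by_cases h : MaxMatchable A i j
  · have hch := theChain_adj hG hadj h
    have hsets : (MMset A i j).toFinite.toFinset
        = (maxMatchings A).filter (fun M => s(i, j) ∈ M) := by
      ext M
      simp only [Set.Finite.mem_toFinset, Finset.mem_filter, mem_maxMatchings]
      exact mem_MMset_adj hG hadj
    rw [mu, beta, if_pos h, hch]
    have hbb : ∀ M : Finset (Sym2 (Fin n)), betaBar A i j M
        = ∏ e ∈ M.erase s(i, j), cycProd A e := by
      intro M
      rw [betaBar, hch]
      congr 1
      ext e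
      simp [chainEdges, Finset.mem_erase, and_comm]
    simp only [hbb, hsets]
    simp [pathProd]
  · rw [mu, beta, if_neg h, zero_mul]
    have hempty : (maxMatchings A).filter (fun M => s(i, j) ∈ M) = ∅ := by
      rw [Finset.filter_eq_empty_iff]
      intro M hM hmem
      exact h (matchable_of_edge (mem_maxMatchings.mp hM) hmem)
    rw [hempty]
    simp

/-- μ_{ij} for non-adjacent pendant `i`, `j` with distinct adjacent neighbours. -/
lemma mu_nonadj (hG : InClassD (DA A)) {i j u v : Fin n}
    (hna : ¬ Adjd (DA A) i j) (hpi : Pendant (DA A) i) (hpj : Pendant (DA A) j)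
    (hiu : Adjd (DA A) i u) (hjv : Adjd (DA A) j v) (huv : u ≠ v)
    (hAuv : Adjd (DA A) u v) :
    mu A i j = -(A i u * A u v * A v j) *
      ∑ M ∈ (maxMatchings A).filter (fun M => s(i, u) ∈ M ∧ s(v, j) ∈ M),
        ∏ e ∈ (M.erase s(i, u)).erase s(v, j), cycProd A e := by
  by_cases h : MaxMatchable A i j
  · have hch := theChain_nonadj hG hna hpi hpj hiu hjv h
    have hsets : (MMset A i j).toFinite.toFinset
        = (maxMatchings A).filter (fun M => s(i, u) ∈ M ∧ s(v, j) ∈ M) := by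
      ext M
      simp only [Set.Finite.mem_toFinset, Finset.mem_filter, mem_maxMatchings]
      rw [← and_assoc] at *
      constructor
      · intro hm
        have := (mem_MMset_nonadj hG hna hpi hpj hiu hjv huv hAuv).mp hm
        exact ⟨⟨this.1, this.2.1⟩, this.2.2⟩
      · rintro ⟨⟨h1, h2⟩, h3⟩
        exact (mem_MMset_nonadj hG hna hpi hpj hiu hjv huv hAuv).mpr ⟨h1, h2, h3⟩
    rw [mu, beta, if_pos h, hch]
    have hbb : ∀ M ∈ (MMset A i j).toFinite.toFinset, betaBar A i j M
        = ∏ e ∈ (M.erase s(i, u)).erase s(v, j), cycProd A e := by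
      intro M hM
      rw [Set.Finite.mem_toFinset] at hM
      have hMM := (mem_MMset_nonadj hG hna hpi hpj hiu hjv huv hAuv).mp hM
      have huvM : s(u, v) ∉ M := by
        intro h1
        have hiv : i ≠ v := fun hh => hna (hh ▸ hjv.symm)
        have hne : s(u, v) ≠ s(i, u) := by
          intro heq
          rw [Sym2.eq_iff] at heq
          rcases heq with ⟨h3, h4⟩ | ⟨h3, h4⟩
          · exact hAuv.ne h4.symm
          · exact hiv h4.symm
        exact hMM.1.1.2 _ h1 _ hMM.2.1 hne u (Sym2.mem_mk_left u v)
          (Sym2.mem_mk_right i u)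
      rw [betaBar, hch]
      congr 1
      ext e
      rw [Finset.mem_filter]
      simp only [Finset.mem_filter, Finset.mem_erase, chainEdges]
      constructor
      · rintro ⟨heM, hne⟩
        simp only [List.tail_cons, List.zipWith_cons_cons, List.zipWith_nil_right, List.mem_cons, List.not_mem_nil] at hne
        push_neg at hne
        exact ⟨hne.2.2.1, hne.1, heM⟩
      · rintro ⟨h1, h2, h3⟩
        refine ⟨h3, ?_⟩
        simp only [List.tail_cons, List.zipWith_cons_cons, List.zipWith_nil_right, List.mem_cons, List.not_mem_nil]
        push_neg
        refine ⟨h2, fun hh => huvM (hh ▸ h3), h1, trivial⟩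
    rw [Finset.sum_congr rfl hbb, hsets]
    have hlen : (([i, u, v, j] : List (Fin n)).length - 2) / 2 = 1 := by simp
    rw [hlen, show pathProd A [i, u, v, j] = A i u * (A u v * (A v j * 1)) from rfl]
    ring
  · rw [mu, beta, if_neg h, zero_mul]
    have hempty : (maxMatchings A).filter
        (fun M => s(i, u) ∈ M ∧ s(v, j) ∈ M) = ∅ := by
      rw [Finset.filter_eq_empty_iff]
      intro M hM hmem
      exact h ⟨M, (mem_MMset_nonadj hG hna hpi hpj hiu hjv huv hAuv).mpr
        ⟨mem_maxMatchings.mp hM, hmem.1, hmem.2⟩⟩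
    rw [hempty]
    simp

end MuLemmas
section Misc

variable {n : ℕ} {A : Matrix (Fin n) (Fin n) ℝ}

lemma A_diag_zero (hG : InClassD (DA A)) (i : Fin n) : A i i = 0 := by
  have := hG.1.1 i
  simpa [DA, not_not] using this

lemma adjd_of_ne (hG : InClassD (DA A)) {i j : Fin n} (hij : i ≠ j)
    (h : A i j ≠ 0) : Adjd (DA A) i j :=
  ⟨hij, h, hG.1.2 i j h⟩

lemma A_eq_zero_of_not_adj (hG : InClassD (DA A)) {i j : Fin n} (hij : i ≠ j)
    (h : ¬ Adjd (DA A) i j) : A i j = 0 := by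
  by_contra hA
  exact h (adjd_of_ne hG hij hA)

lemma mu_zero {i j : Fin n} (h : ¬ MaxMatchable A i j) : mu A i j = 0 := by
  rw [mu, beta, if_neg h, zero_mul]

/-- Elimination principle for maximally matchable pairs. -/
lemma matchable_elim (hG : InClassD (DA A)) {i j : Fin n}
    (h : MaxMatchable A i j) :
    (Adjd (DA A) i j ∧ ∃ M, IsMaxMatching (DA A) M ∧ s(i, j) ∈ M) ∨
    (Pendant (DA A) i ∧ Pendant (DA A) j ∧ ∃ u v, Adjd (DA A) i u ∧
      Adjd (DA A) j v ∧ Adjd (DA A) u v ∧ u ≠ v ∧ u ≠ j ∧ v ≠ i ∧ i ≠ j) := by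
  obtain ⟨M, hM⟩ := h
  obtain ⟨hMmax, c, hccb, halt⟩ := hM
  rcases alt_chain_classify hG hMmax hccb.1 halt with
    ⟨a, b, rfl, hab⟩ | ⟨a, u, v, b, rfl, h0, h1, h2, hap, hbp, hun, hvn⟩
  · left
    have ha : a = i := by simpa using hccb.2.1
    have hb : b = j := by simpa using hccb.2.2
    subst ha; subst hb
    exact ⟨hMmax.1.adj_of_mem hab, M, hMmax, hab⟩
  · right
    have ha : a = i := by simpa using hccb.2.1
    have hb : b = j := by simpa using hccb.2.2
    subst ha; subst hb
    have hnd := hccb.1.1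
    have hch := hccb.1.2.2
    simp only [List.Chain', List.isChain_cons_cons, List.isChain_singleton, and_true] at hch
    refine ⟨hap, hbp, u, v, hch.1, hch.2.2.symm, hch.2.1, ?_, ?_, ?_, ?_⟩
    · rintro rfl; simp at hnd
    · rintro rfl; simp at hnd
    · rintro rfl; simp at hnd
    · rintro rfl; simp at hnd

end Misc
section Diag
open scoped Classical

variable {n : ℕ} {A : Matrix (Fin n) (Fin n) ℝ}

/-- Each diagonal term as a sum over maximum matchings. -/
lemma term_diag (hG : InClassD (DA A)) (i k : Fin n) :
    A i k * mu A k i = ∑ M ∈ maxMatchings A,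
      (if s(k, i) ∈ M then matchProd A M else 0) := by
  by_cases hadj : Adjd (DA A) k i
  · rw [mu_adj hG hadj, ← Finset.sum_filter, ← mul_assoc, Finset.mul_sum]
    refine Finset.sum_congr rfl ?_
    intro M hM
    have hmem := (Finset.mem_filter.mp hM).2
    rw [matchProd, ← Finset.mul_prod_erase _ _ hmem, cycProd_mk]
    ring
  · have hAik : A i k = 0 := by
      by_cases hk : k = i
      · subst hk; exact A_diag_zero hG k
      · exact A_eq_zero_of_not_adj hG (fun h => hk h.symm)
          (fun h => hadj h.symm)
    rw [hAik, zero_mul]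
    symm
    refine Finset.sum_eq_zero ?_
    intro M hM
    rw [if_neg]
    intro hmem
    exact hadj ((mem_maxMatchings.mp hM).1.adj_of_mem hmem)

lemma sum_term_diag (hG : InClassD (DA A)) (i : Fin n) :
    ∑ k, A i k * mu A k i = ∑ M ∈ maxMatchings A,
      (if MatchedIn M i then matchProd A M else 0) := by
  rw [Finset.sum_congr rfl (fun k _ => term_diag hG i k), Finset.sum_comm]
  refine Finset.sum_congr rfl ?_
  intro M hM
  have hMm := mem_maxMatchings.mp hM
  by_cases hm : MatchedIn M i
  · rw [if_pos hm]
    obtain ⟨k0, hk0⟩ := (matched_iff hMm.1).mp hm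
    rw [Finset.sum_eq_single k0]
    · rw [if_pos hk0]
    · intro k _ hkne
      rw [if_neg]
      intro h
      exact hkne (hMm.1.partner_eq h hk0)
    · intro h
      exact absurd (Finset.mem_univ k0) h
  · rw [if_neg hm]
    refine Finset.sum_eq_zero ?_
    intro k _
    rw [if_neg]
    intro h
    exact hm ⟨_, h, Sym2.mem_mk_right k i⟩

end Diag
section OffDiag
open scoped Classical

variable {n : ℕ} {A : Matrix (Fin n) (Fin n) ℝ}

/-- every term vanishes when `j` is non-pendant (and `i ≠ j`). -/
lemma term_offdiag_nonpendant (hG : InClassD (DA A)) {i j : Fin n} (hij : i ≠ j)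
    (hj : ¬ Pendant (DA A) j) (k : Fin n) : A i k * mu A k j = 0 := by
  by_cases hAik : A i k = 0
  · rw [hAik, zero_mul]
  have hki : k ≠ i := fun h => hAik (h ▸ A_diag_zero hG i)
  have hAdj : Adjd (DA A) i k := adjd_of_ne hG (fun h => hki h.symm) hAik
  by_cases hmk : MaxMatchable A k j
  · exfalso
    rcases matchable_elim hG hmk with ⟨hadj, M, hMmax, hmem⟩ | ⟨hpk, hpj, -⟩
    · by_cases hpk : Pendant (DA A) k
      · exact hij ((pnbr_eq hpk hAdj.symm).trans (pnbr_eq hpk hadj).symm)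
      · exact not_both_nonpendant hG hMmax hmem hpk hj
    · exact hj hpj
  · rw [mu_zero hmk, mul_zero]

/-- the term of the cancellation bookkeeping. -/
noncomputable def Fterm (A : Matrix (Fin n) (Fin n) ℝ) (i j q' k : Fin n)
    (M : Finset (Sym2 (Fin n))) : ℝ :=
  if s(q', j) ∈ M then
    (if k = q' then A i q' * A q' j * ∏ e ∈ M.erase s(q', j), cycProd A e
     else if s(k, i) ∈ M then
       -(A i k * A k i * A i q' * A q' j *
         ∏ e ∈ (M.erase s(k, i)).erase s(q', j), cycProd A e)
     else 0)
  else 0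

/-- each term equals a sum of `Fterm`s over all maximum matchings. -/
lemma term_offdiag_pendant (hG : InClassD (DA A)) {i j q' : Fin n} (hij : i ≠ j)
    (hnpi : ¬ Pendant (DA A) i) (hpj : Pendant (DA A) j)
    (hjq' : Adjd (DA A) j q') (hiq' : i ≠ q') (k : Fin n) :
    A i k * mu A k j = ∑ M ∈ maxMatchings A, Fterm A i j q' k M := by
  by_cases hkq : k = q'
  · subst hkq
    rw [mu_adj hG hjq'.symm, ← mul_assoc, Finset.mul_sum,
      Finset.sum_filter]
    refine Finset.sum_congr rfl ?_
    intro M hM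
    rw [Fterm]
    by_cases h1 : s(k, j) ∈ M
    · simp [h1]
    · simp [h1]
  · simp only [Fterm, if_neg hkq]
    by_cases hki : k = i
    · subst hki
      rw [A_diag_zero hG k, zero_mul]
      symm
      refine Finset.sum_eq_zero ?_
      intro M hM
      split_ifs <;> simp [A_diag_zero hG k]
    by_cases hAik : A i k = 0
    · rw [hAik, zero_mul]
      symm
      refine Finset.sum_eq_zero ?_
      intro M hM
      split_ifs <;> simp [hAik]
    have hAdj : Adjd (DA A) i k := adjd_of_ne hG (fun h => hki h.symm) hAik
    by_cases hpk : Pendant (DA A) k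
    · have hnadj_kj : ¬ Adjd (DA A) k j := by
        intro h
        exact hij ((pnbr_eq hpk hAdj.symm).trans (pnbr_eq hpk h).symm)
      by_cases hAiq : Adjd (DA A) i q'
      · rw [mu_nonadj hG hnadj_kj hpk hpj hAdj.symm hjq' hiq' hAiq,
          ← mul_assoc, Finset.mul_sum, Finset.sum_filter]
        refine Finset.sum_congr rfl ?_
        intro M hM
        by_cases h2 : s(q', j) ∈ M <;> by_cases h3 : s(k, i) ∈ M
        · rw [if_pos (⟨h3, h2⟩ : s(k, i) ∈ M ∧ s(q', j) ∈ M), if_pos h2, if_pos h3]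
          ring
        · rw [if_neg (fun h : s(k, i) ∈ M ∧ s(q', j) ∈ M => h3 h.1), if_pos h2,
            if_neg h3]
        · rw [if_neg (fun h : s(k, i) ∈ M ∧ s(q', j) ∈ M => h2 h.2), if_neg h2]
        · rw [if_neg (fun h : s(k, i) ∈ M ∧ s(q', j) ∈ M => h2 h.2), if_neg h2]
      · have hAiq0 : A i q' = 0 := A_eq_zero_of_not_adj hG hiq' hAiq
        have hmu : mu A k j = 0 := by
          refine mu_zero ?_
          intro hm
          rcases matchable_elim hG hm with ⟨hadj, -⟩ |
            ⟨-, -, u, v, hku, hjv, huv, -, -, -, -⟩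
          · exact hnadj_kj hadj
          · have hui : u = i := (pnbr_eq hpk hku).trans (pnbr_eq hpk hAdj.symm).symm
            have hvq : v = q' := (pnbr_eq hpj hjv).trans (pnbr_eq hpj hjq').symm
            exact hAiq (hui ▸ hvq ▸ huv)
        rw [hmu, mul_zero]
        symm
        refine Finset.sum_eq_zero ?_
        intro M hM
        split_ifs <;> simp [hAiq0]
    · have hmu : mu A k j = 0 := by
        refine mu_zero ?_
        intro hm
        rcases matchable_elim hG hm with ⟨hadj, -⟩ | ⟨hpk', -⟩
        · exact hkq ((pnbr_eq hpj hadj.symm).trans (pnbr_eq hpj hjq').symm)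
        · exact hpk hpk'
      rw [hmu, mul_zero]
      symm
      refine Finset.sum_eq_zero ?_
      intro M hM
      split_ifs with h1 h2
      · exact absurd (not_both_nonpendant hG (mem_maxMatchings.mp hM) h2 hpk hnpi)
          (fun h => h)
      · rfl
      · rfl

/-- for each maximum matching, the `Fterm`s cancel. -/
lemma sum_F_zero (hG : InClassD (DA A)) {i j q' : Fin n} (hij : i ≠ j)
    (hnpi : ¬ Pendant (DA A) i) (hiq' : i ≠ q') {M : Finset (Sym2 (Fin n))}
    (hM : M ∈ maxMatchings A) : ∑ k, Fterm A i j q' k M = 0 := by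
  have hMm := mem_maxMatchings.mp hM
  by_cases hqj : s(q', j) ∈ M
  · obtain ⟨p, hp⟩ := (matched_iff hMm.1).mp (matched_of_not_pendant hG hMm hnpi)
    have hpq' : p ≠ q' := by
      rintro rfl
      have := hMm.1.eq_of_mem hp hqj (Sym2.mem_mk_left p i) (Sym2.mem_mk_left p j)
      rw [Sym2.eq_iff] at this
      rcases this with ⟨-, h⟩ | ⟨h1, h2⟩
      · exact hij h
      · exact hij (h2.trans h1)
    have hpi_ne : p ≠ i := hMm.1.ne_of_mem hp
    have hvanish : ∀ x ∈ (Finset.univ : Finset (Fin n)), x ∉ ({q', p} : Finset (Fin n)) →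
        Fterm A i j q' x M = 0 := by
      intro x _ hx
      simp only [Finset.mem_insert, Finset.mem_singleton, not_or] at hx
      rw [Fterm, if_pos hqj, if_neg hx.1]
      split_ifs with h1
      · exact absurd (hMm.1.partner_eq h1 hp) hx.2
      · rfl
    rw [← Finset.sum_subset (Finset.subset_univ {q', p}) hvanish,
      Finset.sum_pair (Ne.symm hpq')]
    have hne_pi_qj : s(p, i) ≠ s(q', j) := by
      intro h
      rw [Sym2.eq_iff] at h
      rcases h with ⟨-, h⟩ | ⟨-, h⟩
      · exact hij h
      · exact hiq' h
    have hmem2 : s(p, i) ∈ M.erase s(q', j) := Finset.mem_erase.mpr ⟨hne_pi_qj, hp⟩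
    have hprod : ∏ e ∈ M.erase s(q', j), cycProd A e
        = cycProd A s(p, i) * ∏ e ∈ (M.erase s(p, i)).erase s(q', j), cycProd A e := by
      rw [Finset.erase_right_comm, Finset.mul_prod_erase _ _ hmem2]
    rw [Fterm, Fterm, if_pos hqj, if_pos hqj, if_pos rfl, if_neg hpq', if_pos hp,
      hprod, cycProd_mk]
    ring
  · refine Finset.sum_eq_zero ?_
    intro k _
    rw [Fterm, if_neg hqj]

/-- the off-diagonal entry vanishes: `i` non-pendant, `j` pendant, `i` not the
neighbour of `j`. -/
lemma sum_offdiag_pendant (hG : InClassD (DA A)) {i j q' : Fin n} (hij : i ≠ j)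
    (hnpi : ¬ Pendant (DA A) i) (hpj : Pendant (DA A) j)
    (hjq' : Adjd (DA A) j q') (hiq' : i ≠ q') :
    ∑ k, A i k * mu A k j = 0 := by
  rw [Finset.sum_congr rfl (fun k _ => term_offdiag_pendant hG hij hnpi hpj hjq' hiq' k),
    Finset.sum_comm]
  exact Finset.sum_eq_zero (fun M hM => sum_F_zero hG hij hnpi hiq' hM)

/-- every term vanishes when `i` is the neighbour of the pendant vertex `j`. -/
lemma term_offdiag_center (hG : InClassD (DA A)) {i j : Fin n} (hij : i ≠ j)
    (hpj : Pendant (DA A) j) (hji : Adjd (DA A) j i) (k : Fin n) :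
    A i k * mu A k j = 0 := by
  by_cases hAik : A i k = 0
  · rw [hAik, zero_mul]
  have hki : k ≠ i := fun h => hAik (h ▸ A_diag_zero hG i)
  have hAdj : Adjd (DA A) i k := adjd_of_ne hG (fun h => hki h.symm) hAik
  have hmu : mu A k j = 0 := by
    refine mu_zero ?_
    intro hm
    rcases matchable_elim hG hm with ⟨hadj, -⟩ |
      ⟨hpk, -, u, v, hku, hjv, huv, hunv, -⟩
    · exact hki ((pnbr_eq hpj hadj.symm).trans (pnbr_eq hpj hji).symm)
    · have hu : u = i := (pnbr_eq hpk hku).trans (pnbr_eq hpk hAdj.symm).symm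
      have hv : v = i := (pnbr_eq hpj hjv).trans (pnbr_eq hpj hji).symm
      exact hunv (hu.trans hv.symm)
  rw [hmu, mul_zero]

end OffDiag
section Swap

variable {n : ℕ} {A : Matrix (Fin n) (Fin n) ℝ}

/-- Exchanging the edge at `q` in a maximum matching for the pendant edge `x—q`. -/
lemma swap_step {x q : Fin n} (hpx : Pendant (DA A) x) (hxq : Adjd (DA A) x q)
    {M : Finset (Sym2 (Fin n))} (hMm : IsMaxMatching (DA A) M)
    {e : Sym2 (Fin n)} (heM : e ∈ M) (hqe : q ∈ e) (hxe : x ∉ e)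
    {f : Sym2 (Fin n)} (hf : f = s(x, q) ∨ f = s(q, x)) :
    IsMaxMatching (DA A) (insert f (M.erase e)) ∧ f ∉ M.erase e ∧
    (insert f (M.erase e)).erase f = M.erase e ∧
    insert e ((insert f (M.erase e)).erase f) = M := by
  have hxun : ¬ MatchedIn M x := by
    intro hm
    have h1 : s(q, x) ∈ M := pendant_matched_edge hMm.1 hpx hxq hm
    have heq := hMm.1.eq_of_mem h1 heM (Sym2.mem_mk_left q x) hqe
    exact hxe (heq ▸ Sym2.mem_mk_right q x)
  have hq_un : ¬ MatchedIn (M.erase e) q := by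
    rintro ⟨e', he', hqe'⟩
    exact Finset.ne_of_mem_erase he'
      (hMm.1.eq_of_mem (Finset.mem_of_mem_erase he') heM hqe' hqe)
  have hx_un' : ¬ MatchedIn (M.erase e) x :=
    fun ⟨e', he', hxe'⟩ => hxun ⟨e', Finset.mem_of_mem_erase he', hxe'⟩
  have hxf : x ∈ f := by rcases hf with rfl | rfl
                         · exact Sym2.mem_mk_left x q
                         · exact Sym2.mem_mk_right q x
  have hnotmem : f ∉ M.erase e :=
    fun h => hx_un' ⟨f, h, hxf⟩
  have hmatch : IsMatching (DA A) (insert f (M.erase e)) := by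
    have hsub := hMm.1.subset (M.erase_subset e)
    rcases hf with rfl | rfl
    · exact hsub.insert hxq hx_un' hq_un
    · exact hsub.insert hxq.symm hq_un hx_un'
  have hcard : (insert f (M.erase e)).card = M.card := by
    rw [Finset.card_insert_of_notMem hnotmem, Finset.card_erase_of_mem heM]
    have : 0 < M.card := Finset.card_pos.mpr ⟨_, heM⟩
    omega
  refine ⟨⟨hmatch, fun M' hM' => (hMm.2 M' hM').trans_eq hcard.symm⟩, hnotmem,
    Finset.erase_insert hnotmem, ?_⟩
  rw [Finset.erase_insert hnotmem, Finset.insert_erase heM]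

/-- The exchange bijection: pendant `i` and `j` with common neighbour `q`. -/
lemma Sval_swap (hG : InClassD (DA A)) {i j q : Fin n} (hij : i ≠ j)
    (hpi : Pendant (DA A) i) (hpj : Pendant (DA A) j) (hiq : Adjd (DA A) i q)
    (hjq : Adjd (DA A) j q) :
    ∑ M ∈ (maxMatchings A).filter (fun M => s(i, q) ∈ M),
      ∏ e ∈ M.erase s(i, q), cycProd A e
    = ∑ M ∈ (maxMatchings A).filter (fun M => s(q, j) ∈ M),
      ∏ e ∈ M.erase s(q, j), cycProd A e := by
  classical
  refine Finset.sum_nbij' (fun M => insert s(q, j) (M.erase s(i, q)))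
    (fun N => insert s(i, q) (N.erase s(q, j))) ?_ ?_ ?_ ?_ ?_
  · intro M hM
    obtain ⟨hMmm, hmem⟩ := Finset.mem_filter.mp hM
    have hMm := mem_maxMatchings.mp hMmm
    have hjnotmem : j ∉ s(i, q) := by
      rw [Sym2.mem_iff]
      rintro (rfl | rfl)
      · exact hij rfl
      · exact hjq.ne rfl
    obtain ⟨h1, h2, h3, h4⟩ := swap_step hpj hjq hMm hmem
      (Sym2.mem_mk_right i q) hjnotmem (Or.inr rfl)
    exact Finset.mem_filter.mpr ⟨mem_maxMatchings.mpr h1, Finset.mem_insert_self _ _⟩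
  · intro N hN
    obtain ⟨hNmm, hmem⟩ := Finset.mem_filter.mp hN
    have hNm := mem_maxMatchings.mp hNmm
    have hinotmem : i ∉ s(q, j) := by
      rw [Sym2.mem_iff]
      rintro (rfl | rfl)
      · exact hiq.ne rfl
      · exact hij rfl
    obtain ⟨h1, h2, h3, h4⟩ := swap_step hpi hiq hNm hmem
      (Sym2.mem_mk_left q j) hinotmem (Or.inl rfl)
    exact Finset.mem_filter.mpr ⟨mem_maxMatchings.mpr h1, Finset.mem_insert_self _ _⟩
  · intro M hM
    obtain ⟨hMmm, hmem⟩ := Finset.mem_filter.mp hM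
    have hMm := mem_maxMatchings.mp hMmm
    have hjnotmem : j ∉ s(i, q) := by
      rw [Sym2.mem_iff]
      rintro (rfl | rfl)
      · exact hij rfl
      · exact hjq.ne rfl
    obtain ⟨h1, h2, h3, h4⟩ := swap_step hpj hjq hMm hmem
      (Sym2.mem_mk_right i q) hjnotmem (Or.inr rfl)
    exact h4
  · intro N hN
    obtain ⟨hNmm, hmem⟩ := Finset.mem_filter.mp hN
    have hNm := mem_maxMatchings.mp hNmm
    have hinotmem : i ∉ s(q, j) := by
      rw [Sym2.mem_iff]
      rintro (rfl | rfl)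
      · exact hiq.ne rfl
      · exact hij rfl
    obtain ⟨h1, h2, h3, h4⟩ := swap_step hpi hiq hNm hmem
      (Sym2.mem_mk_left q j) hinotmem (Or.inl rfl)
    exact h4
  · intro M hM
    obtain ⟨hMmm, hmem⟩ := Finset.mem_filter.mp hM
    have hMm := mem_maxMatchings.mp hMmm
    have hjnotmem : j ∉ s(i, q) := by
      rw [Sym2.mem_iff]
      rintro (rfl | rfl)
      · exact hij rfl
      · exact hjq.ne rfl
    obtain ⟨h1, h2, h3, h4⟩ := swap_step hpj hjq hMm hmem
      (Sym2.mem_mk_right i q) hjnotmem (Or.inr rfl)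
    show _ = ∏ e ∈ (insert s(q, j) (M.erase s(i, q))).erase s(q, j), cycProd A e
    rw [h3]

end Swap
/-- Corollary 2.7: graph-theoretic description of the entries of `AB` with
`B = (μ_{ij}/Δ_A)`. -/
theorem AB_entries_description {n : ℕ} (A : Matrix (Fin n) (Fin n) ℝ)
    (hD : InClassD (DA A)) (hSC : StronglyConnected (DA A)) (hΔ : Delta A ≠ 0)
    (B : Matrix (Fin n) (Fin n) ℝ) (hB : ∀ i j, B i j = mu A i j / Delta A) :
    (∀ i, (¬ Pendant (DA A) i → (A * B) i i = 1) ∧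
      (Pendant (DA A) i → (A * B) i i = (∑ M ∈ MMi A i, matchProd A M) / Delta A)) ∧
    ∀ i j, i ≠ j →
      ((∀ q, Pendant (DA A) i → Pendant (DA A) j → Adjd (DA A) i q → Adjd (DA A) j q →
          (A * B) i j = A q j * mu A i q / Delta A) ∧
        (¬ (Pendant (DA A) i ∧ Pendant (DA A) j ∧
            ∃ q, Adjd (DA A) i q ∧ Adjd (DA A) j q) →
          (A * B) i j = 0)) := by
  classical
  have hAB : ∀ i j, (A * B) i j = (∑ k, A i k * mu A k j) / Delta A := by
    intro i j
    rw [Matrix.mul_apply, Finset.sum_div]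
    refine Finset.sum_congr rfl ?_
    intro k _
    rw [hB, mul_div_assoc]
  constructor
  · intro i
    constructor
    · intro hi
      rw [hAB, sum_term_diag hD i]
      have hsum : (∑ M ∈ maxMatchings A,
          if MatchedIn M i then matchProd A M else 0) = Delta A := by
        rw [Delta]
        refine Finset.sum_congr rfl ?_
        intro M hM
        exact if_pos (matched_of_not_pendant hD (mem_maxMatchings.mp hM) hi)
      rw [hsum, div_self hΔ]
    · intro hi
      rw [hAB, sum_term_diag hD i]
      congr 1
      have hMMi : MMi A i = (maxMatchings A).filter (fun M => MatchedIn M i) := by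
        ext M
        rw [Finset.mem_filter]
        simp only [MMi, Set.Finite.mem_toFinset, Set.mem_setOf_eq,
          Finset.mem_filter, mem_maxMatchings, MatchedIn]
      rw [hMMi, Finset.sum_filter]
  · intro i j hij
    constructor
    · intro q hpi hpj hiq hjq
      have hsingle : ∑ k, A i k * mu A k j = A i q * mu A q j := by
        refine Finset.sum_eq_single q ?_ ?_
        · intro k _ hkq
          have hAik : A i k = 0 := by
            by_cases hki : k = i
            · exact hki ▸ A_diag_zero hD i
            · refine A_eq_zero_of_not_adj hD (fun h => hki h.symm) ?_
              intro h
              exact hkq ((pnbr_eq hpi h).trans (pnbr_eq hpi hiq).symm)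
          rw [hAik, zero_mul]
        · intro h
          exact absurd (Finset.mem_univ q) h
      have key : A i q * mu A q j = A q j * mu A i q := by
        rw [mu_adj hD hjq.symm, mu_adj hD hiq, ← Sval_swap hD hij hpi hpj hiq hjq]
        ring
      rw [hAB, hsingle, key]
    · intro hnot
      rw [hAB]
      have hzero : ∑ k, A i k * mu A k j = 0 := by
        by_cases hpj : Pendant (DA A) j
        · by_cases hpi : Pendant (DA A) i
          · -- both pendant, no common neighbour
            have hiq : Adjd (DA A) i (pnbr hpi) := pnbr_adj hpi
            have hjq' : Adjd (DA A) j (pnbr hpj) := pnbr_adj hpj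
            have hqq' : pnbr hpi ≠ pnbr hpj := by
              intro h
              exact hnot ⟨hpi, hpj, pnbr hpi, hiq, by rw [h]; exact hjq'⟩
            refine Finset.sum_eq_zero ?_
            intro k _
            by_cases hAik : A i k = 0
            · rw [hAik, zero_mul]
            have hki : k ≠ i := fun h => hAik (h ▸ A_diag_zero hD i)
            have hAdj : Adjd (DA A) i k := adjd_of_ne hD (fun h => hki h.symm) hAik
            have hkq : k = pnbr hpi := pnbr_eq hpi hAdj
            have hmu : mu A k j = 0 := by
              refine mu_zero ?_
              intro hm
              rcases matchable_elim hD hm with ⟨hadj, -⟩ |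
                ⟨hpk, -, u, v, hku, hjv, huv, -, -, -, -⟩
              · exact hqq' (hkq.symm.trans (pnbr_eq hpj hadj.symm))
              · have hu : u = i := (pnbr_eq hpk hku).trans (pnbr_eq hpk hAdj.symm).symm
                have hv : v = pnbr hpj := pnbr_eq hpj hjv
                have hadj2 : Adjd (DA A) i (pnbr hpj) := hu ▸ hv ▸ huv
                exact hqq' (pnbr_eq hpi hadj2).symm
            rw [hmu, mul_zero]
          · -- i non-pendant, j pendant
            have hjq' : Adjd (DA A) j (pnbr hpj) := pnbr_adj hpj
            by_cases hiq' : i = pnbr hpj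
            · refine Finset.sum_eq_zero ?_
              intro k _
              refine term_offdiag_center hD hij hpj ?_ k
              rw [hiq']
              exact hjq'
            · exact sum_offdiag_pendant hD hij hpi hpj hjq' hiq'
        · exact Finset.sum_eq_zero (fun k _ => term_offdiag_nonpendant hD hij hpj k)
      rw [hzero, zero_div]
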